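/- If T: V → g is a Θ-twisted O-operator, then the bracket [u,v,w]_T = ρ(Tu,Tv)w + ρ(Tv,Tw)u + ρ(Tw,Tu)v + Θ(Tu,Tv,Tw) defines a 3-Lie algebra structure on V, and T is a morphism of 3-Lie algebras from (V, [·,·,·]_T) to (g, [·,·,·]_g), i.e. T([u,v,w]_T) = [Tu,Tv,Tw]_g. -/

import Mathlib

universe u

def Skew12 {A M : Type*} [Neg M] (f : A → A → A → M) : Prop :=
  ∀ x y z, f x y z = - f y x z

def Skew23 {A M : Type*} [Neg M] (f : A → A → A → M) : Prop :=
  ∀ x y z, f x y z = - f x z y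

def LinFst (K : Type*) [Field K] {A M : Type*} [AddCommGroup A] [Module K A]
    [AddCommGroup M] [Module K M] (f : A → A → A → M) : Prop :=
  ∀ (a : K) (x x' y z : A), f (a • x + x') y z = a • f x y z + f x' y z

def LinThd (K : Type*) [Field K] {A M : Type*} [AddCommGroup A] [Module K A]
    [AddCommGroup M] [Module K M] (f : A → A → A → M) : Prop :=
  ∀ (a : K) (x y z z' : A), f x y (a • z + z') = a • f x y z + f x y z'

/-- A 3-Lie algebra structure: a trilinear skew-symmetric bracket satisfying
the Filippov (fundamental) identity. -/
def IsThreeLie (K : Type*) [Field K] {A : Type*} [AddCommGroup A] [Module K A]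
    (b : A → A → A → A) : Prop :=
  LinFst K b ∧ Skew12 b ∧ Skew23 b ∧
    ∀ x1 x2 x3 x4 x5 : A,
      b x1 x2 (b x3 x4 x5) =
        b (b x1 x2 x3) x4 x5 + b x3 (b x1 x2 x4) x5 + b x3 x4 (b x1 x2 x5)

/-- A representation of a 3-Lie algebra on a module. -/
def IsRep (K : Type*) [Field K] {A M : Type*} [AddCommGroup A] [Module K A]
    [AddCommGroup M] [Module K M] (b : A → A → A → A) (ρ : A → A → M → M) : Prop :=
  (∀ (a : K) (x x' y : A) (v : M), ρ (a • x + x') y v = a • ρ x y v + ρ x' y v) ∧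
  (∀ (x y : A) (v : M), ρ x y v = - ρ y x v) ∧
  (∀ (x y : A) (a : K) (v v' : M), ρ x y (a • v + v') = a • ρ x y v + ρ x y v') ∧
  (∀ (x1 x2 x3 x4 : A) (v : M),
      ρ x1 x2 (ρ x3 x4 v) =
        ρ (b x1 x2 x3) x4 v + ρ x3 (b x1 x2 x4) v + ρ x3 x4 (ρ x1 x2 v)) ∧
  (∀ (x1 x2 x3 x4 : A) (v : M),
      ρ (b x1 x2 x3) x4 v =
        ρ x1 x2 (ρ x3 x4 v) + ρ x2 x3 (ρ x1 x4 v) + ρ x3 x1 (ρ x2 x4 v))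

/-- A 2-cocycle in the Chevalley-Eilenberg complex of a 3-Lie algebra. -/
def IsCocycle (K : Type*) [Field K] {A M : Type*} [AddCommGroup A] [Module K A]
    [AddCommGroup M] [Module K M] (b : A → A → A → A) (ρ : A → A → M → M)
    (Θ : A → A → A → M) : Prop :=
  LinFst K Θ ∧ Skew12 Θ ∧ Skew23 Θ ∧
    ∀ x1 x2 y1 y2 y3 : A,
      Θ x1 x2 (b y1 y2 y3) + ρ x1 x2 (Θ y1 y2 y3) =
        Θ (b x1 x2 y1) y2 y3 + Θ y1 (b x1 x2 y2) y3 + Θ y1 y2 (b x1 x2 y3)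
          + ρ y2 y3 (Θ x1 x2 y1) + ρ y3 y1 (Θ x1 x2 y2) + ρ y1 y2 (Θ x1 x2 y3)

/-- A Θ-twisted O-operator on a 3-Lie algebra. -/
def IsTwistedO {K : Type*} [Field K] {A M : Type*} [AddCommGroup A] [Module K A]
    [AddCommGroup M] [Module K M] (b : A → A → A → A) (ρ : A → A → M → M)
    (Θ : A → A → A → M) (T : M →ₗ[K] A) : Prop :=
  ∀ u v w : M,
    b (T u) (T v) (T w) =
      T (ρ (T u) (T v) w + ρ (T v) (T w) u + ρ (T w) (T u) v + Θ (T u) (T v) (T w))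

/-- The Θ-twisted semidirect product bracket on A × M. -/
def sdBracket {A M : Type*} [AddCommGroup M]
    (b : A → A → A → A) (ρ : A → A → M → M) (Θ : A → A → A → M) :
    A × M → A × M → A × M → A × M :=
  fun p q r =>
    (b p.1 q.1 r.1,
      ρ p.1 q.1 r.2 + ρ r.1 p.1 q.2 + ρ q.1 r.1 p.2 + Θ p.1 q.1 r.1)

/-- The bracket [u,v,w]_T induced on V by a twisted O-operator T. -/
def indBracket {K : Type*} [Field K] {A M : Type*} [AddCommGroup A] [Module K A]
    [AddCommGroup M] [Module K M] (ρ : A → A → M → M) (Θ : A → A → A → M)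
    (T : M →ₗ[K] A) : M → M → M → M :=
  fun u v w =>
    ρ (T u) (T v) w + ρ (T v) (T w) u + ρ (T w) (T u) v + Θ (T u) (T v) (T w)

/-- Chevalley-Eilenberg coboundary of a 1-cochain θ : g → V. -/
def cobound {K : Type*} [Field K] {A M : Type*} [AddCommGroup A] [Module K A]
    [AddCommGroup M] [Module K M] (b : A → A → A → A) (ρ : A → A → M → M)
    (θ : A →ₗ[K] M) : A → A → A → M :=
  fun x y z => ρ x y (θ z) + ρ y z (θ x) + ρ z x (θ y) - θ (b x y z)

/-- Cyclic sum {x,y,z}^C = {x,y,z} + {y,z,x} + {z,x,y}. -/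
def cycSum {A : Type*} [AddCommGroup A] (m : A → A → A → A) : A → A → A → A :=
  fun x y z => m x y z + m y z x + m z x y

/-- Subadjacent bracket [x,y,z]_* = {x,y,z}^C + [[x,y,z]] of a 3-NS-Lie algebra. -/
def nsStar {A : Type*} [AddCommGroup A] (m n : A → A → A → A) : A → A → A → A :=
  fun x y z => cycSum m x y z + n x y z

/-- A 3-NS-Lie algebra structure on A given by operations m = {·,·,·} and n = [[·,·,·]]. -/
def IsThreeNS (K : Type*) [Field K] {A : Type*} [AddCommGroup A] [Module K A]
    (m n : A → A → A → A) : Prop :=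
  LinFst K m ∧ LinThd K m ∧ Skew12 m ∧ LinFst K n ∧ Skew12 n ∧ Skew23 n ∧
  (∀ x1 x2 x3 x4 x5 : A,
      m x1 x2 (m x3 x4 x5) =
        m (cycSum m x1 x2 x3) x4 x5 + m (n x1 x2 x3) x4 x5
          + m x3 (cycSum m x1 x2 x4) x5 + m x3 (n x1 x2 x4) x5
          + m x3 x4 (m x1 x2 x5)) ∧
  (∀ x1 x2 x3 x4 x5 : A,
      m (cycSum m x1 x2 x3) x4 x5 + m (n x1 x2 x3) x4 x5 =
        m x1 x2 (m x3 x4 x5) + m x2 x3 (m x1 x4 x5) + m x3 x1 (m x2 x4 x5)) ∧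
  (∀ x1 x2 x3 x4 x5 : A,
      n x1 x2 (nsStar m n x3 x4 x5) + m x1 x2 (n x3 x4 x5) =
        n (nsStar m n x1 x2 x3) x4 x5 + n x3 (nsStar m n x1 x2 x4) x5
          + n x3 x4 (nsStar m n x1 x2 x5)
          + m x4 x5 (n x1 x2 x3) + m x5 x3 (n x1 x2 x4) + m x3 x4 (n x1 x2 x5))

/-- Nijenhuis operator on a 3-Lie algebra. -/
def IsNijenhuis {K : Type*} [Field K] {A : Type*} [AddCommGroup A] [Module K A]
    (b : A → A → A → A) (N : A →ₗ[K] A) : Prop :=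
  ∀ x y z : A,
    b (N x) (N y) (N z) =
      N (b (N x) (N y) z + b (N x) y (N z) + b x (N y) (N z)
        - N (b (N x) y z + b x (N y) z + b x y (N z)) + N (N (b x y z)))

/-- A Lie algebra structure (bilinear skew bracket with Jacobi identity). -/
def IsLie (K : Type*) [Field K] {A : Type*} [AddCommGroup A] [Module K A]
    (br : A → A → A) : Prop :=
  (∀ (a : K) (x x' y : A), br (a • x + x') y = a • br x y + br x' y) ∧
  (∀ x y : A, br x y = - br y x) ∧
  (∀ x y z : A, br x (br y z) = br (br x y) z + br y (br x z))

/-- A representation of a Lie algebra. -/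
def IsLieRep (K : Type*) [Field K] {A M : Type*} [AddCommGroup A] [Module K A]
    [AddCommGroup M] [Module K M] (br : A → A → A) (ρ : A → M → M) : Prop :=
  (∀ (a : K) (x x' : A) (v : M), ρ (a • x + x') v = a • ρ x v + ρ x' v) ∧
  (∀ (x : A) (a : K) (v v' : M), ρ x (a • v + v') = a • ρ x v + ρ x v') ∧
  (∀ (x y : A) (v : M), ρ (br x y) v = ρ x (ρ y v) - ρ y (ρ x v))

/-- A Chevalley-Eilenberg 2-cocycle of a Lie algebra. -/
def IsLieCocycle (K : Type*) [Field K] {A M : Type*} [AddCommGroup A] [Module K A]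
    [AddCommGroup M] [Module K M] (br : A → A → A) (ρ : A → M → M)
    (Θ : A → A → M) : Prop :=
  (∀ (a : K) (x x' y : A), Θ (a • x + x') y = a • Θ x y + Θ x' y) ∧
  (∀ x y : A, Θ x y = - Θ y x) ∧
  (∀ x y z : A,
      ρ x (Θ y z) + ρ y (Θ z x) + ρ z (Θ x y)
        + Θ x (br y z) + Θ y (br z x) + Θ z (br x y) = 0)

/-- A Θ-twisted O-operator on a Lie algebra. -/
def IsLieTwistedO {K : Type*} [Field K] {A M : Type*} [AddCommGroup A] [Module K A]
    [AddCommGroup M] [Module K M] (br : A → A → A) (ρ : A → M → M)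
    (Θ : A → A → M) (T : M →ₗ[K] A) : Prop :=
  ∀ u v : M, br (T u) (T v) = T (ρ (T u) v - ρ (T v) u + Θ (T u) (T v))

/-- The 3-Lie bracket induced by a Lie bracket and a trace map τ. -/
def inducedTri {K : Type*} [Field K] {A : Type*} [AddCommGroup A] [Module K A]
    (br : A → A → A) (τ : A →ₗ[K] K) : A → A → A → A :=
  fun x y z => τ x • br y z + τ y • br z x + τ z • br x y

/-- The induced representation ρ_τ of the induced 3-Lie algebra. -/
def rhoTau {K : Type*} [Field K] {A M : Type*} [AddCommGroup A] [Module K A]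
    [AddCommGroup M] [Module K M] (ρ : A → M → M) (τ : A →ₗ[K] K) :
    A → A → M → M :=
  fun x y v => τ x • ρ y v - τ y • ρ x v

/-- The induced 2-cocycle Θ_τ on the induced 3-Lie algebra. -/
def thetaTau {K : Type*} [Field K] {A M : Type*} [AddCommGroup A] [Module K A]
    [AddCommGroup M] [Module K M] (Θ : A → A → M) (τ : A →ₗ[K] K) :
    A → A → A → M :=
  fun x y z => τ x • Θ y z + τ y • Θ z x + τ z • Θ x y

/-- An NS-Lie algebra structure on A. -/
def IsNSLie (K : Type*) [Field K] {A : Type*} [AddCommGroup A] [Module K A]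
    (m n : A → A → A) : Prop :=
  (∀ (a : K) (x x' y : A), m (a • x + x') y = a • m x y + m x' y) ∧
  (∀ (x : A) (a : K) (y y' : A), m x (a • y + y') = a • m x y + m x y') ∧
  (∀ (a : K) (x x' y : A), n (a • x + x') y = a • n x y + n x' y) ∧
  (∀ x y : A, n x y = - n y x) ∧
  (∀ x y z : A,
      m (m x y) z - m x (m y z) - m (m y x) z + m y (m x z) + m (n x y) z = 0) ∧
  (∀ x y z : A,
      n x (m y z - m z y + n y z) + n y (m z x - m x z + n z x)
        + n z (m x y - m y x + n x y)
        + m x (n y z) + m y (n z x) + m z (n x y) = 0)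

/-- the induced bracket [·,·,·]_T is a 3-Lie algebra structure on V and
T is a morphism of 3-Lie algebras. -/
theorem stmt2 {K : Type*} [Field K] {A M : Type*} [AddCommGroup A] [Module K A]
    [AddCommGroup M] [Module K M]
    (b : A → A → A → A) (ρ : A → A → M → M) (Θ : A → A → A → M) (T : M →ₗ[K] A)
    (hb : IsThreeLie K b) (hρ : IsRep K b ρ) (hΘ : IsCocycle K b ρ Θ)
    (hT : IsTwistedO b ρ Θ T) :
    IsThreeLie K (indBracket ρ Θ T) ∧
      ∀ u v w : M, T (indBracket ρ Θ T u v w) = b (T u) (T v) (T w) := by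
  obtain ⟨ρ1, ρskew, ρ3, ρf1, ρf2⟩ := hρ
  obtain ⟨Θ1, Θ12, Θ23, Θc⟩ := hΘ
  -- derived facts about ρ
  have ρ0 : ∀ x y : A, ρ x y (0 : M) = 0 := by
    intro x y
    have h := ρ3 x y 1 0 0
    simp only [one_smul, add_zero] at h
    exact left_eq_add.mp h
  have ρadd3 : ∀ (x y : A) (v v' : M), ρ x y (v + v') = ρ x y v + ρ x y v' := by
    intro x y v v'
    have h := ρ3 x y 1 v v'
    simpa using h
  have ρsmul3 : ∀ (x y : A) (a : K) (v : M), ρ x y (a • v) = a • ρ x y v := by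
    intro x y a v
    have h := ρ3 x y a v 0
    simpa [ρ0] using h
  have ρneg3 : ∀ (x y : A) (v : M), ρ x y (-v) = -ρ x y v := by
    intro x y v
    have h := ρsmul3 x y (-1 : K) v
    simpa [neg_one_smul] using h
  have ρ2 : ∀ (y : A) (a : K) (x x' : A) (v : M),
      ρ y (a • x + x') v = a • ρ y x v + ρ y x' v := by
    intro y a x x' v
    rw [ρskew y (a • x + x') v, ρ1 a x x' y v, ρskew x y v, ρskew x' y v]
    module
  have key : ∀ u v w : M, T (indBracket ρ Θ T u v w) = b (T u) (T v) (T w) := by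
    intro u v w
    simp only [indBracket]
    exact (hT u v w).symm
  refine ⟨⟨?_, ?_, ?_, ?_⟩, key⟩
  · -- LinFst
    intro a x x' y z
    simp only [indBracket, map_add, map_smul]
    rw [ρ1 a (T x) (T x') (T y) z, ρ3 (T y) (T z) a x x', ρ2 (T z) a (T x) (T x') y,
      Θ1 a (T x) (T x') (T y) (T z)]
    module
  · -- Skew12
    intro x y z
    simp only [indBracket]
    rw [ρskew (T y) (T x) z, ρskew (T x) (T z) y, ρskew (T z) (T y) x,
      Θ12 (T y) (T x) (T z)]
    abel
  · -- Skew23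
    intro x y z
    simp only [indBracket]
    rw [ρskew (T x) (T z) y, ρskew (T z) (T y) x, ρskew (T y) (T x) z,
      Θ23 (T x) (T y) (T z)]
    abel
  · -- Filippov identity
    intro x1 x2 x3 x4 x5
    simp only [indBracket]
    rw [← hT x3 x4 x5, ← hT x1 x2 x3, ← hT x1 x2 x4, ← hT x1 x2 x5]
    simp only [ρadd3]
    have h5 := ρf1 (T x1) (T x2) (T x3) (T x4) x5
    have h3 := ρf1 (T x1) (T x2) (T x4) (T x5) x3
    have h4 := ρf1 (T x1) (T x2) (T x5) (T x3) x4
    have hx2 := ρf2 (T x3) (T x4) (T x5) (T x1) x2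
    have hx1 : ρ (T x2) (b (T x3) (T x4) (T x5)) x1 =
        ρ (T x3) (T x4) (ρ (T x2) (T x5) x1) + ρ (T x4) (T x5) (ρ (T x2) (T x3) x1)
          + ρ (T x5) (T x3) (ρ (T x2) (T x4) x1) := by
      rw [ρskew (T x2) (b (T x3) (T x4) (T x5)) x1,
        ρf2 (T x3) (T x4) (T x5) (T x2) x1,
        ρskew (T x5) (T x2) x1, ρskew (T x3) (T x2) x1, ρskew (T x4) (T x2) x1,
        ρneg3, ρneg3, ρneg3]
      abel
    have hΘ2 : Θ (T x1) (T x2) (b (T x3) (T x4) (T x5)) =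
        (Θ (b (T x1) (T x2) (T x3)) (T x4) (T x5)
          + Θ (T x3) (b (T x1) (T x2) (T x4)) (T x5)
          + Θ (T x3) (T x4) (b (T x1) (T x2) (T x5))
          + ρ (T x4) (T x5) (Θ (T x1) (T x2) (T x3))
          + ρ (T x5) (T x3) (Θ (T x1) (T x2) (T x4))
          + ρ (T x3) (T x4) (Θ (T x1) (T x2) (T x5)))
          - ρ (T x1) (T x2) (Θ (T x3) (T x4) (T x5)) :=
      eq_sub_iff_add_eq.mpr (Θc (T x1) (T x2) (T x3) (T x4) (T x5))
    rw [h5, h3, h4, hx2, hx1, hΘ2]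
    abel
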